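/- Suppose AV_k = V_{k+1} H̄_k with V_{k+1} having linearly independent columns, and suppose the i-th shifted residual satisfies r_{0,i} = β_i r_{0,1}. Let d₁ ∈ ℂ^k give the base-shift projected residual r₁ = r_{0,1} − (A − σ₁ I) V_k d₁. If d_i ∈ ℂ^k solves the first k rows of the system (H̄_k − σ_i Ī) d_i = β_i (H̄_k − σ₁ Ī) d₁, then there exists a scalar γ_i such that the i-th projected residual satisfies r_{0,i} − (A − σ_i I) V_k d_i = β_i r₁ + γ_i v_{k+1}, where v_{k+1} is the last column of V_{k+1}. That is, after the eigenvector projection, each shifted residual is parallel to the base residual except for a component in the direction v_{k+1}. -/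

import Mathlib

open Matrix

/-- After the projection over approximate eigenvectors, each shifted residual is
parallel to the base residual except for a component in the direction of the extra
vector `v_{k+1}`: if `dᵢ` solves the first `k` rows of `(H̄ₖ − σᵢĪ) dᵢ = βᵢ (H̄ₖ − σ₁Ī) d₁`,
then `r₀ᵢ − (A − σᵢI) Vₖ dᵢ = βᵢ r₁ + γᵢ v_{k+1}` for some scalar `γᵢ`. -/
theorem eigenvector_projection_residual_direction {n k : ℕ}
    (A : Matrix (Fin n) (Fin n) ℂ)
    (V : Matrix (Fin n) (Fin (k + 1)) ℂ)
    (hindep : LinearIndependent ℂ (fun j => fun i => V i j))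
    (Vk : Matrix (Fin n) (Fin k) ℂ)
    (hVk : Vk = V.submatrix id Fin.castSucc)
    (vlast : Fin n → ℂ)
    (hvlast : vlast = fun i => V i (Fin.last k))
    (H : Matrix (Fin (k + 1)) (Fin k) ℂ)
    (hArnoldi : A * Vk = V * H)
    (Ibar : Matrix (Fin (k + 1)) (Fin k) ℂ)
    (hIbar : Ibar = Matrix.of fun (p : Fin (k + 1)) (q : Fin k) =>
      if (p : ℕ) = (q : ℕ) then (1 : ℂ) else 0)
    (hHk : IsUnit (H.submatrix (Fin.castSucc) id).det)
    (σ₁ σi βi : ℂ)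
    (r01 r0i : Fin n → ℂ)
    (hr0i : r0i = βi • r01)
    (d₁ di : Fin k → ℂ)
    (hdi : ∀ p : Fin k,
      ((H - σi • Ibar) *ᵥ di) (Fin.castSucc p) =
        βi * (((H - σ₁ • Ibar) *ᵥ d₁) (Fin.castSucc p)))
    (r₁ : Fin n → ℂ)
    (hr₁ : r₁ = r01 - ((A - σ₁ • 1) * Vk) *ᵥ d₁) :
    ∃ γi : ℂ, r0i - ((A - σi • 1) * Vk) *ᵥ di = βi • r₁ + γi • vlast := by
  set u₁ := (H - σ₁ • Ibar) *ᵥ d₁ with hu₁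
  set ui := (H - σi • Ibar) *ᵥ di with hui
  have hVI : V * Ibar = Vk := by
    subst hIbar hVk
    ext i q
    simp only [Matrix.mul_apply, Matrix.submatrix_apply, Matrix.of_apply, id]
    rw [Finset.sum_eq_single (Fin.castSucc q)]
    · simp
    · intro p _ hp
      rw [if_neg, mul_zero]
      intro h
      exact hp (Fin.ext (by simpa using h))
    · intro h; exact absurd (Finset.mem_univ _) h
  have key : ∀ σ : ℂ, (A - σ • 1) * Vk = V * (H - σ • Ibar) := by
    intro σ
    rw [Matrix.sub_mul, hArnoldi, Matrix.mul_sub, Matrix.smul_mul, Matrix.one_mul,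
      Matrix.mul_smul, hVI]
  refine ⟨(βi • u₁ - ui) (Fin.last k), ?_⟩
  have hw : V *ᵥ (βi • u₁ - ui) = (βi • u₁ - ui) (Fin.last k) • vlast := by
    ext i
    simp only [Matrix.mulVec, dotProduct, hvlast, Pi.smul_apply, smul_eq_mul]
    rw [Fin.sum_univ_castSucc]
    have h0 : ∀ p : Fin k, (βi • u₁ - ui) (Fin.castSucc p) = 0 := by
      intro p
      simp [hdi p, mul_comm]
    simp only [h0, mul_zero, Finset.sum_const_zero, zero_add]
    ring
  have hw' : βi • (V *ᵥ u₁) - V *ᵥ ui = (βi • u₁ - ui) (Fin.last k) • vlast := by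
    rw [← Matrix.mulVec_smul, ← Matrix.mulVec_sub, hw]
  rw [hr0i, hr₁, key, key, ← Matrix.mulVec_mulVec, ← Matrix.mulVec_mulVec, ← hw',
    smul_sub]
  abel
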